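/- For any harmonic polynomial g and any polynomial f in ℂ[z_1,...,z_n], and any l ≥ 1: Δ^l(g f) = Σ_{k=0}^l 2^k·C(l,k)·Σ_{s ∈ ℕ^n, |s| = k} (k!/s!)·(∂^k g/∂z^s)·(∂^k Δ^{l-k} f/∂z^s). -/

import Mathlib

open MvPolynomial

/-- The Laplace operator on polynomials in `n` variables. -/
noncomputable def lap {n : ℕ} (P : MvPolynomial (Fin n) ℂ) : MvPolynomial (Fin n) ℂ :=
  ∑ i, pderiv i (pderiv i P)

/-- The mixed partial derivative `∂^{|s|}/∂z^s` for a multi-index `s`. -/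
noncomputable def pderivMulti {n : ℕ} (s : Fin n → ℕ)
    (P : MvPolynomial (Fin n) ℂ) : MvPolynomial (Fin n) ℂ :=
  (List.finRange n).foldr (fun i Q => (pderiv i)^[s i] Q) P

/-- The multi-indices of total degree `k` (as a finite set). -/
noncomputable def multiIndices (n k : ℕ) : Finset (Fin n → ℕ) :=
  (Fintype.piFinset fun _ : Fin n => Finset.range (k + 1)).filter fun s => ∑ i, s i = k

section Aux

variable {n : ℕ}

theorem pderiv_comm' (i j : Fin n) (P : MvPolynomial (Fin n) ℂ) :
    pderiv i (pderiv j P) = pderiv j (pderiv i P) := by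
  induction P using MvPolynomial.induction_on' with
  | monomial s a =>
    rcases eq_or_ne i j with rfl | hij
    · rfl
    · simp only [pderiv_monomial]
      rw [Finsupp.tsub_apply, Finsupp.tsub_apply, Finsupp.single_apply, Finsupp.single_apply,
        if_neg hij, if_neg (Ne.symm hij)]
      have hs : s - Finsupp.single j 1 - Finsupp.single i 1
          = s - Finsupp.single i 1 - Finsupp.single j 1 := by
        apply Finsupp.ext
        intro t
        rw [Finsupp.tsub_apply, Finsupp.tsub_apply, Finsupp.tsub_apply, Finsupp.tsub_apply,
          Finsupp.single_apply, Finsupp.single_apply]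
        split_ifs <;> simp_all
      rw [hs]
      congr 1
      simp only [Nat.sub_zero]; ring
  | add p q hp hq => simp [hp, hq]

private noncomputable def pdFold (L : List (Fin n)) (s : Fin n → ℕ)
    (P : MvPolynomial (Fin n) ℂ) : MvPolynomial (Fin n) ℂ :=
  L.foldr (fun i Q => (pderiv i)^[s i] Q) P

theorem pdFold_congr (L : List (Fin n)) {s t : Fin n → ℕ} (h : ∀ j ∈ L, s j = t j)
    (P : MvPolynomial (Fin n) ℂ) : pdFold L s P = pdFold L t P := by
  induction L with
  | nil => rfl
  | cons j L ih =>
    simp only [pdFold, List.foldr_cons] at *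
    rw [ih fun x hx => h x (List.mem_cons_of_mem _ hx), h j List.mem_cons_self]

theorem pdFold_pderiv (L : List (Fin n)) (s : Fin n → ℕ) (i : Fin n)
    (P : MvPolynomial (Fin n) ℂ) : pdFold L s (pderiv i P) = pderiv i (pdFold L s P) := by
  induction L with
  | nil => rfl
  | cons j L ih =>
    simp only [pdFold, List.foldr_cons] at *
    rw [ih]
    exact (Function.Commute.iterate_left (fun Q => pderiv_comm' j i Q) (s j)) _

theorem pdFold_update (L : List (Fin n)) (hL : L.Nodup) (s : Fin n → ℕ) (i : Fin n)
    (hi : i ∈ L) (P : MvPolynomial (Fin n) ℂ) :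
    pdFold L (Function.update s i (s i + 1)) P = pderiv i (pdFold L s P) := by
  induction L with
  | nil => simp at hi
  | cons j L ih =>
    rcases List.nodup_cons.mp hL with ⟨hj, hL'⟩
    simp only [pdFold, List.foldr_cons] at *
    rcases eq_or_ne j i with rfl | hji
    · have : pdFold L (Function.update s j (s j + 1)) P = pdFold L s P :=
        pdFold_congr L (fun x hx => Function.update_of_ne (fun h => hj (by rwa [h] at hx)) _ _) P
      simp only [pdFold] at this
      rw [this, Function.update_self, Function.iterate_succ_apply']
    · rw [ih hL' ((List.mem_cons.mp hi).resolve_left (fun h => hji h.symm)),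
        Function.update_of_ne hji]
      exact (Function.Commute.iterate_left (fun Q => pderiv_comm' j i Q) (s j)) _

theorem pderivMulti_update (s : Fin n → ℕ) (i : Fin n) (P : MvPolynomial (Fin n) ℂ) :
    pderivMulti (Function.update s i (s i + 1)) P = pderiv i (pderivMulti s P) :=
  pdFold_update _ (List.nodup_finRange n) s i (List.mem_finRange i) P

theorem pderivMulti_pderiv (s : Fin n → ℕ) (i : Fin n) (P : MvPolynomial (Fin n) ℂ) :
    pderivMulti s (pderiv i P) = pderiv i (pderivMulti s P) :=
  pdFold_pderiv _ s i P

theorem pderivMulti_add (s : Fin n → ℕ) (P Q : MvPolynomial (Fin n) ℂ) :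
    pderivMulti s (P + Q) = pderivMulti s P + pderivMulti s Q := by
  show pdFold _ s _ = pdFold _ s _ + pdFold _ s _
  induction (List.finRange n) with
  | nil => rfl
  | cons j L ih =>
    simp only [pdFold, List.foldr_cons] at *
    rw [ih]
    induction s j with
    | zero => rfl
    | succ m ihm => rw [Function.iterate_succ_apply', Function.iterate_succ_apply',
        Function.iterate_succ_apply', ihm, map_add]

theorem pderivMulti_sum {ι : Type*} (s : Fin n → ℕ) (A : Finset ι)
    (h : ι → MvPolynomial (Fin n) ℂ) :
    pderivMulti s (∑ a ∈ A, h a) = ∑ a ∈ A, pderivMulti s (h a) :=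
  map_sum (AddMonoidHom.mk' (pderivMulti s) (pderivMulti_add s)) h A

theorem pderivMulti_zero_fun (P : MvPolynomial (Fin n) ℂ) :
    pderivMulti (fun _ => 0) P = P := by
  show pdFold _ _ _ = P
  induction (List.finRange n) with
  | nil => rfl
  | cons j L ih => simpa [pdFold, List.foldr_cons] using ih

theorem lap_add (P Q : MvPolynomial (Fin n) ℂ) : lap (P + Q) = lap P + lap Q := by
  simp [lap, Finset.sum_add_distrib]

theorem lap_sum {ι : Type*} (A : Finset ι) (h : ι → MvPolynomial (Fin n) ℂ) :
    lap (∑ a ∈ A, h a) = ∑ a ∈ A, lap (h a) :=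
  map_sum (AddMonoidHom.mk' lap lap_add) h A

theorem lap_natCast_mul (m : ℕ) (P : MvPolynomial (Fin n) ℂ) :
    lap ((m : MvPolynomial (Fin n) ℂ) * P) = (m : MvPolynomial (Fin n) ℂ) * lap P := by
  rw [← map_natCast (C : ℂ →+* MvPolynomial (Fin n) ℂ)]
  simp [lap, pderiv_C_mul, Finset.mul_sum]

theorem lap_mul (P Q : MvPolynomial (Fin n) ℂ) :
    lap (P * Q) = lap P * Q + P * lap Q + 2 * ∑ i, pderiv i P * pderiv i Q := by
  simp only [lap, pderiv_mul, map_add]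
  rw [Finset.sum_mul, Finset.mul_sum, Finset.mul_sum, ← Finset.sum_add_distrib,
    ← Finset.sum_add_distrib]
  exact Finset.sum_congr rfl fun i _ => by ring

theorem lap_pderivMulti (s : Fin n → ℕ) (P : MvPolynomial (Fin n) ℂ) :
    lap (pderivMulti s P) = pderivMulti s (lap P) := by
  show _ = pderivMulti s (∑ i, pderiv i (pderiv i P))
  rw [pderivMulti_sum]
  exact Finset.sum_congr rfl fun i _ => by
    rw [pderivMulti_pderiv, pderivMulti_pderiv]

theorem mem_multiIndices {k : ℕ} {s : Fin n → ℕ} :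
    s ∈ multiIndices n k ↔ ∑ i, s i = k := by
  simp only [multiIndices, Finset.mem_filter, Fintype.mem_piFinset, Finset.mem_range]
  refine ⟨fun h => h.2, fun h => ⟨fun i => ?_, h⟩⟩
  have : s i ≤ ∑ j, s j := Finset.single_le_sum (fun j _ => Nat.zero_le _) (Finset.mem_univ i)
  omega

theorem multiIndices_zero : multiIndices n 0 = {fun _ => 0} := by
  ext s
  simp only [mem_multiIndices, Finset.mem_singleton, Finset.sum_eq_zero_iff, Finset.mem_univ,
    forall_true_left, funext_iff]

/-- Pascal identity for multinomial coefficients. -/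
theorem multinomial_pascal {k : ℕ} (t : Fin n → ℕ) (ht : ∑ i, t i = k + 1) :
    Nat.multinomial Finset.univ t =
      ∑ i, if t i ≠ 0 then Nat.multinomial Finset.univ (Function.update t i (t i - 1)) else 0 := by
  have hP : 0 < ∏ i, (t i).factorial := Finset.prod_pos fun i _ => Nat.factorial_pos _
  apply Nat.eq_of_mul_eq_mul_left hP
  rw [Nat.multinomial_spec, ht, Finset.mul_sum]
  have key : ∀ i, (∏ j, (t j).factorial) *
      (if t i ≠ 0 then Nat.multinomial Finset.univ (Function.update t i (t i - 1)) else 0)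
      = t i * k.factorial := by
    intro i
    rcases Nat.eq_zero_or_pos (t i) with h0 | hpos
    · simp [h0]
    · rw [if_pos (Nat.pos_iff_ne_zero.mp hpos)]
      have hprod : (∏ j, (t j).factorial)
          = t i * ∏ j, ((Function.update t i (t i - 1)) j).factorial := by
        rw [← Finset.mul_prod_erase Finset.univ _ (Finset.mem_univ i),
          ← Finset.mul_prod_erase Finset.univ _ (Finset.mem_univ i), ← mul_assoc,
          Function.update_self, Nat.mul_factorial_pred hpos.ne']
        congr 1
        exact Finset.prod_congr rfl fun j hj =>
          by rw [Function.update_of_ne (Finset.ne_of_mem_erase hj)]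
      rw [hprod, mul_assoc, Nat.multinomial_spec]
      congr 1
      have hsum : ∑ j, (Function.update t i (t i - 1)) j = k := by
        rw [← Finset.add_sum_erase Finset.univ _ (Finset.mem_univ i)]
        rw [← Finset.add_sum_erase Finset.univ t (Finset.mem_univ i)] at ht
        simp only [Function.update_self]
        rw [Finset.sum_congr rfl (fun j hj =>
          by rw [Function.update_of_ne (Finset.ne_of_mem_erase hj)])]
        have ht' : t i + (Finset.univ.erase i).sum t = k + 1 := ht
        omega
      rw [hsum]
  rw [Finset.sum_congr rfl fun i _ => key i, ← Finset.sum_mul, ht, Nat.factorial_succ]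

theorem sum_update_succ {s : Fin n → ℕ} {k : ℕ} (hs : ∑ i, s i = k) (i : Fin n) :
    ∑ j, Function.update s i (s i + 1) j = k + 1 := by
  rw [← Finset.add_sum_erase Finset.univ _ (Finset.mem_univ i), Function.update_self,
    Finset.sum_congr rfl (fun j hj => Function.update_of_ne (Finset.ne_of_mem_erase hj) _ _)]
  rw [← Finset.add_sum_erase Finset.univ s (Finset.mem_univ i)] at hs
  omega

theorem sum_update_pred {t : Fin n → ℕ} {k : ℕ} (ht : ∑ j, t j = k + 1) (i : Fin n)
    (hi : t i ≠ 0) : ∑ j, Function.update t i (t i - 1) j = k := by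
  rw [← Finset.add_sum_erase Finset.univ _ (Finset.mem_univ i)]
  simp only [Function.update_self]
  rw [Finset.sum_congr rfl (fun j hj => Function.update_of_ne (Finset.ne_of_mem_erase hj) _ _)]
  rw [← Finset.add_sum_erase Finset.univ t (Finset.mem_univ i)] at ht
  have hE : ∑ x ∈ Finset.univ.erase i, t x = (Finset.univ.erase i).sum t := rfl
  omega

theorem update_pred_succ {t : Fin n → ℕ} (i : Fin n) (hi : t i ≠ 0) :
    Function.update (Function.update t i (t i - 1)) i (Function.update t i (t i - 1) i + 1) = t := by
  ext j
  rcases eq_or_ne j i with rfl | hji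
  · simp only [Function.update_self]; omega
  · simp [Function.update_of_ne hji]

theorem update_succ_pred {s : Fin n → ℕ} (i : Fin n) :
    Function.update (Function.update s i (s i + 1)) i (Function.update s i (s i + 1) i - 1) = s := by
  ext j
  rcases eq_or_ne j i with rfl | hji
  · simp
  · simp [Function.update_of_ne hji]

theorem step (k : ℕ) (i : Fin n) (G : (Fin n → ℕ) → MvPolynomial (Fin n) ℂ) :
    ∑ t ∈ multiIndices n (k + 1),
        (if t i ≠ 0 then
            (Nat.multinomial Finset.univ (Function.update t i (t i - 1)) : MvPolynomial (Fin n) ℂ)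
          else 0) * G t
      = ∑ s ∈ multiIndices n k,
          (Nat.multinomial Finset.univ s : MvPolynomial (Fin n) ℂ)
            * G (Function.update s i (s i + 1)) := by
  rw [← Finset.sum_filter_of_ne (p := fun t => t i ≠ 0)
    (fun t _ h => by intro h0; simp [h0] at h)]
  refine Finset.sum_nbij' (fun t => Function.update t i (t i - 1))
    (fun s => Function.update s i (s i + 1)) ?_ ?_ ?_ ?_ ?_
  · intro t ht
    simp only [Finset.mem_filter, mem_multiIndices, ne_eq] at ht
    exact mem_multiIndices.mpr (sum_update_pred ht.1 i ht.2)
  · intro s hs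
    simp only [Finset.mem_filter, mem_multiIndices]
    exact ⟨sum_update_succ (mem_multiIndices.mp hs) i, by simp⟩
  · intro t ht
    simp only [Finset.mem_filter, ne_eq] at ht
    exact update_pred_succ i ht.2
  · intro s _
    exact update_succ_pred i
  · intro t ht
    simp only [Finset.mem_filter, ne_eq] at ht
    rw [if_pos ht.2, update_pred_succ i ht.2]

theorem reindex (k : ℕ) (F : (Fin n → ℕ) → MvPolynomial (Fin n) ℂ) :
    ∑ s ∈ multiIndices n k, (Nat.multinomial Finset.univ s : MvPolynomial (Fin n) ℂ) *
        ∑ i, F (Function.update s i (s i + 1))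
      = ∑ t ∈ multiIndices n (k + 1),
          (Nat.multinomial Finset.univ t : MvPolynomial (Fin n) ℂ) * F t := by
  have rhs : ∀ t ∈ multiIndices n (k + 1),
      (Nat.multinomial Finset.univ t : MvPolynomial (Fin n) ℂ) * F t
        = ∑ i, (if t i ≠ 0 then
            (Nat.multinomial Finset.univ (Function.update t i (t i - 1)) : MvPolynomial (Fin n) ℂ)
          else 0) * F t := by
    intro t ht
    rw [← Finset.sum_mul]
    congr 1
    rw [multinomial_pascal t (mem_multiIndices.mp ht)]
    push_cast
    exact Finset.sum_congr rfl fun i _ => by split_ifs <;> simp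
  rw [Finset.sum_congr rfl rhs, Finset.sum_comm]
  simp only [Finset.mul_sum]
  rw [Finset.sum_comm]
  exact Finset.sum_congr rfl fun i _ => (step k i F).symm

theorem pascal_sum {R : Type*} [CommSemiring R] (l : ℕ) (A : ℕ → R) :
    ∑ k ∈ Finset.range (l + 1), ((2 ^ k * Nat.choose l k : ℕ) : R) * (A k + 2 * A (k + 1))
      = ∑ k ∈ Finset.range (l + 2), ((2 ^ k * Nat.choose (l + 1) k : ℕ) : R) * A k := by
  simp only [mul_add]
  rw [Finset.sum_add_distrib]
  rw [Finset.sum_range_succ' (fun k => ((2 ^ k * Nat.choose (l + 1) k : ℕ) : R) * A k) (l + 1)]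
  simp only [Nat.choose_succ_succ, Nat.choose_zero_right, pow_zero, one_mul, Nat.cast_one,
    Nat.mul_add, Nat.cast_add, Nat.cast_mul, Nat.cast_pow, Nat.cast_ofNat, add_mul]
  rw [Finset.sum_add_distrib]
  rw [Finset.sum_range_succ (fun k => ((2:R) ^ (k+1) * (Nat.choose l (k+1) : R)) * A (k + 1)) l]
  rw [Nat.choose_succ_self]
  rw [Finset.sum_range_succ' (fun x => (2:R) ^ x * (l.choose x : R) * A x) l]
  simp only [Nat.choose_zero_right, pow_zero, Nat.cast_one, one_mul, mul_zero, zero_mul,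
    add_zero, Nat.cast_zero]
  have h2 : ∀ x : ℕ, (2:R) ^ x * (l.choose x : R) * (2 * A (x + 1))
      = 2 ^ (x + 1) * (l.choose x : R) * A (x + 1) := fun x => by ring
  simp only [h2]
  ring

/-- The bilinear expression `T_k(g, h)`. -/
noncomputable def Tg {n : ℕ} (g : MvPolynomial (Fin n) ℂ) (k : ℕ)
    (h : MvPolynomial (Fin n) ℂ) : MvPolynomial (Fin n) ℂ :=
  ∑ s ∈ multiIndices n k, (Nat.multinomial Finset.univ s : MvPolynomial (Fin n) ℂ) *
    (pderivMulti s g * pderivMulti s h)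

theorem lap_Tg (g : MvPolynomial (Fin n) ℂ) (hg : lap g = 0) (k : ℕ)
    (h : MvPolynomial (Fin n) ℂ) :
    lap (Tg g k h) = Tg g k (lap h) + 2 * Tg g (k + 1) h := by
  unfold Tg
  rw [lap_sum]
  have term : ∀ s ∈ multiIndices n k,
      lap ((Nat.multinomial Finset.univ s : MvPolynomial (Fin n) ℂ) *
          (pderivMulti s g * pderivMulti s h))
        = (Nat.multinomial Finset.univ s : MvPolynomial (Fin n) ℂ) *
            (pderivMulti s g * pderivMulti s (lap h))
          + 2 * ((Nat.multinomial Finset.univ s : MvPolynomial (Fin n) ℂ) *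
            ∑ i, (pderivMulti (Function.update s i (s i + 1)) g *
                  pderivMulti (Function.update s i (s i + 1)) h)) := by
    intro s _
    rw [lap_natCast_mul, lap_mul, lap_pderivMulti, lap_pderivMulti, hg]
    have hz : pderivMulti s (0 : MvPolynomial (Fin n) ℂ) = 0 := by
      have := pderivMulti_add s 0 0
      simpa using this.symm
    rw [hz]
    rw [Finset.sum_congr rfl fun i _ => by
      rw [← pderivMulti_update s i g, ← pderivMulti_update s i h]]
    ring
  rw [Finset.sum_congr rfl term, Finset.sum_add_distrib]
  congr 1
  rw [← Finset.mul_sum,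
    reindex k (fun t => pderivMulti t g * pderivMulti t h)]

theorem main' (g f : MvPolynomial (Fin n) ℂ) (hg : lap g = 0) (l : ℕ) :
    lap^[l] (g * f) =
      ∑ k ∈ Finset.range (l + 1),
        ((2 ^ k * Nat.choose l k : ℕ) : MvPolynomial (Fin n) ℂ) *
          Tg g k (lap^[l - k] f) := by
  induction l with
  | zero =>
    simp [Tg, multiIndices_zero, pderivMulti_zero_fun, Nat.multinomial, Finset.sum_range_one]
  | succ l ih =>
    rw [Function.iterate_succ_apply', ih, lap_sum]
    have hterm : ∀ k ∈ Finset.range (l + 1),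
        lap (((2 ^ k * Nat.choose l k : ℕ) : MvPolynomial (Fin n) ℂ) * Tg g k (lap^[l - k] f))
          = ((2 ^ k * Nat.choose l k : ℕ) : MvPolynomial (Fin n) ℂ) *
              (Tg g k (lap^[l + 1 - k] f) + 2 * Tg g (k + 1) (lap^[l + 1 - (k + 1)] f)) := by
      intro k hk
      rw [Finset.mem_range] at hk
      rw [lap_natCast_mul, lap_Tg g hg]
      have h1 : lap (lap^[l - k] f) = lap^[l + 1 - k] f := by
        have he : l + 1 - k = (l - k) + 1 := by omega
        rw [he, Function.iterate_succ_apply']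
      have h2 : l + 1 - (k + 1) = l - k := by omega
      rw [h1, h2]
    rw [Finset.sum_congr rfl hterm]
    exact pascal_sum l (fun k => Tg g k (lap^[l + 1 - k] f))

end Aux

theorem lap_pow_mul_harmonic_expansion {n : ℕ} (g f : MvPolynomial (Fin n) ℂ)
    (hg : lap g = 0) (l : ℕ) (hl : 1 ≤ l) :
    lap^[l] (g * f) =
      ∑ k ∈ Finset.range (l + 1),
        ((2 ^ k * Nat.choose l k : ℕ) : MvPolynomial (Fin n) ℂ) *
          ∑ s ∈ multiIndices n k,
            ((Nat.factorial k / ∏ i, Nat.factorial (s i) : ℕ) : MvPolynomial (Fin n) ℂ) *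
              (pderivMulti s g * pderivMulti s (lap^[l - k] f)) := by
  rw [main' g f hg l]
  refine Finset.sum_congr rfl fun k _ => ?_
  congr 1
  unfold Tg
  refine Finset.sum_congr rfl fun s hs => ?_
  congr 2
  rw [Nat.multinomial, mem_multiIndices.mp hs]
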